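/- Let G be a graph (simple, connected, locally finite, with edges of arbitrary lengths), L(G) its line graph, and h : L(G) → G the canonical map. For every x, y ∈ L(G), d_{L(G)}(x, y) ≤ d_G(h(x), h(y)) + 2 l_max, where l_max := sup_{e ∈ E(G)} L(e). -/

import Mathlib

open Metric
open scoped ENNReal

noncomputable section

/-- A geodesic arc from `x` to `y` in a metric space `X`: the image of an isometric
embedding of the interval `[0, dist x y]` sending `0` to `x` and `dist x y` to `y`. -/
def IsGeodesicArc {X : Type} [MetricSpace X] (x y : X) (s : Set X) : Prop :=
  ∃ γ : ℝ → X, γ 0 = x ∧ γ (dist x y) = y ∧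
    (∀ a ∈ Set.Icc (0 : ℝ) (dist x y), ∀ b ∈ Set.Icc (0 : ℝ) (dist x y),
      dist (γ a) (γ b) = |a - b|) ∧
    s = γ '' Set.Icc (0 : ℝ) (dist x y)

/-- A geodesic triangle with vertices `x, y, z` and sides `s₁ = [xy]`, `s₂ = [yz]`,
`s₃ = [zx]`. -/
def IsGeodTriangle {X : Type} [MetricSpace X] (x y z : X) (s₁ s₂ s₃ : Set X) : Prop :=
  IsGeodesicArc x y s₁ ∧ IsGeodesicArc y z s₂ ∧ IsGeodesicArc z x s₃

/-- The sharp constant for thinness of the side `s` with respect to the set `t`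
(the union of the other sides): the supremum over points of `s` of the distance to `t`. -/
def sideThin {X : Type} [MetricSpace X] (s t : Set X) : ℝ≥0∞ :=
  ⨆ p ∈ s, ENNReal.ofReal (infDist p t)

/-- The sharp thin constant `δ(T)` of a triangle (or trilateral) with sides
`s₁ s₂ s₃`: a triangle is `δ`-thin iff `triThin s₁ s₂ s₃ ≤ δ`. -/
def triThin {X : Type} [MetricSpace X] (s₁ s₂ s₃ : Set X) : ℝ≥0∞ :=
  max (sideThin s₁ (s₂ ∪ s₃)) (max (sideThin s₂ (s₃ ∪ s₁)) (sideThin s₃ (s₁ ∪ s₂)))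

/-- The hyperbolicity constant `δ(X)` of a metric space:
`δ(X) = sup { δ(T) : T is a geodesic triangle in X }` (with value in `[0,∞]`). -/
def hypConst (X : Type) [MetricSpace X] : ℝ≥0∞ :=
  ⨆ (x : X) (y : X) (z : X) (s₁ : Set X) (s₂ : Set X) (s₃ : Set X)
    (_ : IsGeodTriangle x y z s₁ s₂ s₃), triThin s₁ s₂ s₃

/-- A simple closed curve in a metric space: an injective continuous image of a circle. -/
def IsSimpleClosedCurve {X : Type} [MetricSpace X] (s : Set X) : Prop :=
  ∃ f : AddCircle (1 : ℝ) → X, Continuous f ∧ Function.Injective f ∧ Set.range f = s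

/-- A simple, connected, locally finite graph with edges of arbitrary (positive) lengths,
regarded as a geodesic metric space `X`: each edge `[u,v]` of length `ℓ s(u,v)` is
identified with the real interval `[0, ℓ s(u,v)]` via the parametrization `param u v`,
and the distance is the shortest-path distance. -/
structure MetricGraph where
  /-- the vertices -/
  V : Type
  /-- the (simple) graph structure -/
  G : SimpleGraph V
  conn : G.Connected
  locFin : ∀ v : V, (G.neighborSet v).Finite
  /-- the length of each edge -/
  ℓ : Sym2 V → ℝ
  ℓ_pos : ∀ e ∈ G.edgeSet, 0 < ℓ e
  /-- the set of points of the graph, as a metric space -/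
  X : Type
  [mX : MetricSpace X]
  /-- the inclusion of the vertices among the points -/
  ι : V → X
  ι_inj : Function.Injective ι
  /-- the arclength parametrization of each edge by `[0, ℓ s(u,v)]` -/
  param : ∀ u v : V, G.Adj u v → ℝ → X
  param_zero : ∀ (u v : V) (h : G.Adj u v), param u v h 0 = ι u
  param_symm : ∀ (u v : V) (h : G.Adj u v) (t : ℝ),
    param v u h.symm t = param u v h (ℓ s(u, v) - t)
  param_injOn : ∀ (u v : V) (h : G.Adj u v),
    Set.InjOn (param u v h) (Set.Icc 0 (ℓ s(u, v)))
  /-- every point of the graph lies on some edge -/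
  cover : ∀ x : X, ∃ (u v : V) (h : G.Adj u v),
    ∃ t ∈ Set.Icc (0 : ℝ) (ℓ s(u, v)), x = param u v h t
  /-- the distance between vertices is the shortest-path distance -/
  dist_vertex : ∀ u v : V,
    dist (ι u) (ι v) = sInf { L : ℝ | ∃ w : G.Walk u v, L = (w.edges.map ℓ).sum }
  /-- the distance from an interior point of an edge to any other point is realized
  either within the edge or through one of the two endpoints of the edge -/
  dist_eq : ∀ (u v : V) (h : G.Adj u v), ∀ t ∈ Set.Icc (0 : ℝ) (ℓ s(u, v)), ∀ y : X,
    dist (param u v h t) y =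
      sInf ({ t + dist (ι u) y, (ℓ s(u, v) - t) + dist (ι v) y } ∪
            { d : ℝ | ∃ r ∈ Set.Icc (0 : ℝ) (ℓ s(u, v)), y = param u v h r ∧ d = |t - r| })
  /-- the space of points is a geodesic metric space -/
  geodesic : ∀ x y : X, ∃ s : Set X, IsGeodesicArc x y s

attribute [instance] MetricGraph.mX

namespace MetricGraph

variable (M : MetricGraph)

/-- The set of points of an edge of the graph. -/
def edgePoints {u v : M.V} (h : M.G.Adj u v) : Set M.X :=
  M.param u v h '' Set.Icc 0 (M.ℓ s(u, v))

/-- The midpoint `Pm(e)` of an edge. -/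
def midpt {u v : M.V} (h : M.G.Adj u v) : M.X :=
  M.param u v h (M.ℓ s(u, v) / 2)

/-- `PMV(G)`: the set of points which are vertices or midpoints of edges. -/
def PMV : Set M.X :=
  Set.range M.ι ∪ { x | ∃ (u v : M.V) (h : M.G.Adj u v), x = M.midpt h }

/-- `l_max = sup_{e ∈ E(G)} L(e)` (with value in `[0,∞]`). -/
def lmax : ℝ≥0∞ :=
  ⨆ e : M.G.edgeSet, ENNReal.ofReal (M.ℓ e.1)

/-- A cycle graph: a (finite) connected graph in which every vertex has degree 2.
(Connectedness is part of the `MetricGraph` structure.) -/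
def IsCycleGraph : Prop :=
  Finite M.V ∧ ∀ v : M.V, (M.G.neighborSet v).ncard = 2

end MetricGraph

/-- The line graph `L(G)` of a metric graph `G`: its vertices correspond to the edges
of `G`, two of them being adjacent when the corresponding edges of `G` share a vertex;
the edge `[V_{e_i}, V_{e_j}]` of `L(G)` has length `(L(e_i) + L(e_j))/2`. -/
structure LineGraphOf (M : MetricGraph) where
  /-- the line graph, as a metric graph -/
  L : MetricGraph
  /-- the vertices of `L(G)` correspond to the edges of `G` -/
  vEquiv : L.V ≃ M.G.edgeSet
  adj_iff : ∀ a b : L.V, L.G.Adj a b ↔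
    (a ≠ b ∧ ∃ v : M.V, v ∈ (vEquiv a : Sym2 M.V) ∧ v ∈ (vEquiv b : Sym2 M.V))
  len_eq : ∀ a b : L.V, L.G.Adj a b →
    L.ℓ s(a, b) = (M.ℓ (vEquiv a : Sym2 M.V) + M.ℓ (vEquiv b : Sym2 M.V)) / 2

/-- The set `PM_LV(L(G))`: points of `L(G)` which are vertices or points
`Pm_L([V_{e_i},V_{e_j}])`, i.e. the point of the edge `[V_{e_i},V_{e_j}]` at distance
`L(e_i)/2` from `V_{e_i}`. -/
def lineGraphPMLV (M : MetricGraph) (LG : LineGraphOf M) : Set LG.L.X :=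
  Set.range LG.L.ι ∪
    { x | ∃ (a b : LG.L.V) (hab : LG.L.G.Adj a b),
        x = LG.L.param a b hab (M.ℓ (LG.vEquiv a : Sym2 M.V) / 2) }

/-- The canonical map `h : L(G) → G`.  It sends the vertex `V_e` to the midpoint `Pm(e)`
of `e`, the point `Pm_L([V_{e_i},V_{e_j}])` to the common vertex `e_i ∩ e_j`, and maps
each half-edge of `L(G)` isometrically onto the corresponding half-edge of `G`:
if `e_a = s(u,w)` and `w` is the common vertex of `e_a` and `e_b`, then the point of the
edge `[V_{e_a},V_{e_b}]` at distance `t ∈ [0, L(e_a)/2]` from `V_{e_a}` is sent to the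
point of `e_a` at distance `L(e_a)/2 + t` from `u`. -/
structure CanonicalMap (M : MetricGraph) (LG : LineGraphOf M) where
  /-- the underlying map on points -/
  h : LG.L.X → M.X
  h_halfEdge : ∀ (a b : LG.L.V) (hab : LG.L.G.Adj a b) (u w : M.V) (huw : M.G.Adj u w),
    (LG.vEquiv a : Sym2 M.V) = s(u, w) → w ∈ (LG.vEquiv b : Sym2 M.V) →
    ∀ t ∈ Set.Icc (0 : ℝ) (M.ℓ (LG.vEquiv a : Sym2 M.V) / 2),
      h (LG.L.param a b hab t) =
        M.param u w huw (M.ℓ (LG.vEquiv a : Sym2 M.V) / 2 + t)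

end

section AuxLemmas

variable (M : MetricGraph)

lemma mg_walk_sum_nonneg {u v : M.V} (W : M.G.Walk u v) :
    0 ≤ (W.edges.map M.ℓ).sum := by
  apply List.sum_nonneg
  intro x hx
  obtain ⟨e, he, rfl⟩ := List.mem_map.1 hx
  exact (M.ℓ_pos e (W.edges_subset_edgeSet he)).le

lemma mg_dist_le_walk {u v : M.V} (W : M.G.Walk u v) :
    dist (M.ι u) (M.ι v) ≤ (W.edges.map M.ℓ).sum := by
  rw [M.dist_vertex]
  exact csInf_le ⟨0, by rintro L ⟨W', rfl⟩; exact mg_walk_sum_nonneg M W'⟩ ⟨W, rfl⟩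

lemma mg_dist_le_of_adj {u v : M.V} (h : M.G.Adj u v) :
    dist (M.ι u) (M.ι v) ≤ M.ℓ s(u, v) := by
  simpa using mg_dist_le_walk M (SimpleGraph.Walk.cons h SimpleGraph.Walk.nil)

lemma mg_dist_param_le {u v : M.V} (h : M.G.Adj u v) {t r : ℝ}
    (ht : t ∈ Set.Icc (0:ℝ) (M.ℓ s(u,v))) (hr : r ∈ Set.Icc (0:ℝ) (M.ℓ s(u,v))) :
    dist (M.param u v h t) (M.param u v h r) ≤ |t - r| := by
  rw [M.dist_eq u v h t ht]
  apply csInf_le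
  · refine ⟨0, ?_⟩
    rintro d hd
    simp only [Set.mem_union, Set.mem_insert_iff, Set.mem_singleton_iff,
      Set.mem_setOf_eq] at hd
    rcases hd with (rfl | rfl) | ⟨r', _, _, rfl⟩
    · have := dist_nonneg (x := M.ι u) (y := M.param u v h r)
      linarith [ht.1]
    · have := dist_nonneg (x := M.ι v) (y := M.param u v h r)
      linarith [ht.2]
    · exact abs_nonneg _
  · exact Or.inr ⟨r, hr, rfl, rfl⟩

lemma mg_dist_param_vertex {u v : M.V} (h : M.G.Adj u v) {t : ℝ}
    (ht : t ∈ Set.Icc (0:ℝ) (M.ℓ s(u,v))) :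
    dist (M.param u v h t) (M.ι u) ≤ t := by
  have h0 : (0:ℝ) ∈ Set.Icc (0:ℝ) (M.ℓ s(u,v)) := ⟨le_refl _, ht.1.trans ht.2⟩
  have := mg_dist_param_le M h ht h0
  rw [M.param_zero u v h] at this
  simpa [abs_of_nonneg ht.1] using this

lemma lg_vertex_dist_le (LG : LineGraphOf M) {w w' : M.V} (W : M.G.Walk w w') :
    ∀ e f : M.G.edgeSet, w ∈ (e : Sym2 M.V) → w' ∈ (f : Sym2 M.V) →
      dist (LG.L.ι (LG.vEquiv.symm e)) (LG.L.ι (LG.vEquiv.symm f)) ≤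
        M.ℓ e / 2 + (W.edges.map M.ℓ).sum + M.ℓ f / 2 := by
  induction W with
  | nil =>
    intro e f he hf
    rename_i w
    by_cases hef : e = f
    · subst hef
      simp only [SimpleGraph.Walk.edges_nil, List.map_nil, List.sum_nil]
      have := M.ℓ_pos e e.2
      simp only [dist_self]
      linarith
    · have hne : LG.vEquiv.symm e ≠ LG.vEquiv.symm f := fun hh => hef (LG.vEquiv.symm.injective hh)
      have hadj : LG.L.G.Adj (LG.vEquiv.symm e) (LG.vEquiv.symm f) := by
        refine (LG.adj_iff _ _).2 ⟨hne, w, ?_, ?_⟩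
        · rwa [Equiv.apply_symm_apply]
        · rwa [Equiv.apply_symm_apply]
      have h1 := mg_dist_le_of_adj LG.L hadj
      have h2 := LG.len_eq _ _ hadj
      rw [Equiv.apply_symm_apply, Equiv.apply_symm_apply] at h2
      simp only [SimpleGraph.Walk.edges_nil, List.map_nil, List.sum_nil]
      rw [h2] at h1
      linarith
  | cons h W ih =>
    rename_i w z w'
    intro e f he hf
    have hg : s(w, z) ∈ M.G.edgeSet := h
    set g : M.G.edgeSet := ⟨s(w, z), hg⟩ with hgdef
    have hzg : z ∈ (g : Sym2 M.V) := Sym2.mem_mk_right w z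
    have hwg : w ∈ (g : Sym2 M.V) := Sym2.mem_mk_left w z
    have IH := ih g f hzg hf
    have hsum : ((SimpleGraph.Walk.cons h W).edges.map M.ℓ).sum
        = M.ℓ (g : Sym2 M.V) + (W.edges.map M.ℓ).sum := by
      simp [hgdef]
    rw [hsum]
    by_cases heg : e = g
    · rw [heg]
      have := M.ℓ_pos _ g.2
      linarith
    · have hne : LG.vEquiv.symm e ≠ LG.vEquiv.symm g := fun hh => heg (LG.vEquiv.symm.injective hh)
      have hadj : LG.L.G.Adj (LG.vEquiv.symm e) (LG.vEquiv.symm g) := by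
        refine (LG.adj_iff _ _).2 ⟨hne, w, ?_, ?_⟩
        · rwa [Equiv.apply_symm_apply]
        · rwa [Equiv.apply_symm_apply]
      have h1 := mg_dist_le_of_adj LG.L hadj
      have h2 := LG.len_eq _ _ hadj
      rw [Equiv.apply_symm_apply, Equiv.apply_symm_apply] at h2
      rw [h2] at h1
      have htri := dist_triangle (LG.L.ι (LG.vEquiv.symm e)) (LG.L.ι (LG.vEquiv.symm g))
        (LG.L.ι (LG.vEquiv.symm f))
      linarith

lemma lg_vertex_dist_le' (LG : LineGraphOf M) (a c : LG.L.V) {w w' : M.V}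
    (hw : w ∈ (LG.vEquiv a : Sym2 M.V)) (hw' : w' ∈ (LG.vEquiv c : Sym2 M.V)) :
    dist (LG.L.ι a) (LG.L.ι c) ≤
      M.ℓ (LG.vEquiv a : Sym2 M.V) / 2 + dist (M.ι w) (M.ι w') +
        M.ℓ (LG.vEquiv c : Sym2 M.V) / 2 := by
  have hne : { L : ℝ | ∃ Wk : M.G.Walk w w', L = (Wk.edges.map M.ℓ).sum }.Nonempty := by
    obtain ⟨W⟩ := M.conn.preconnected w w'
    exact ⟨_, W, rfl⟩
  have hbound : dist (LG.L.ι a) (LG.L.ι c)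
      - M.ℓ (LG.vEquiv a : Sym2 M.V) / 2 - M.ℓ (LG.vEquiv c : Sym2 M.V) / 2
      ≤ sInf { L : ℝ | ∃ Wk : M.G.Walk w w', L = (Wk.edges.map M.ℓ).sum } := by
    refine le_csInf hne ?_
    rintro L ⟨W, rfl⟩
    have := lg_vertex_dist_le M LG W (LG.vEquiv a) (LG.vEquiv c) hw hw'
    rw [Equiv.symm_apply_apply, Equiv.symm_apply_apply] at this
    linarith
  rw [M.dist_vertex]
  linarith

lemma lg_decomp_half (LG : LineGraphOf M) (hm : CanonicalMap M LG)
    (a b : LG.L.V) (hab : LG.L.G.Adj a b) {v0 : M.V}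
    (hv0a : v0 ∈ (LG.vEquiv a : Sym2 M.V)) (hv0b : v0 ∈ (LG.vEquiv b : Sym2 M.V))
    {t : ℝ} (ht : t ∈ Set.Icc (0:ℝ) (M.ℓ (LG.vEquiv a : Sym2 M.V) / 2)) :
    dist (LG.L.param a b hab t) (LG.L.ι a) ≤ t ∧
    dist (hm.h (LG.L.param a b hab t)) (M.ι v0) ≤ M.ℓ (LG.vEquiv a : Sym2 M.V) / 2 - t := by
  have hea_pos : 0 < M.ℓ (LG.vEquiv a : Sym2 M.V) := M.ℓ_pos _ (LG.vEquiv a).2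
  have heb_pos : 0 < M.ℓ (LG.vEquiv b : Sym2 M.V) := M.ℓ_pos _ (LG.vEquiv b).2
  obtain ⟨u, hequ⟩ := Sym2.mem_iff_exists.1 hv0a
  have hequ' : (LG.vEquiv a : Sym2 M.V) = s(u, v0) := by rw [hequ, Sym2.eq_swap]
  have huw : M.G.Adj u v0 := by
    have := (LG.vEquiv a).2
    rw [hequ'] at this
    exact this
  constructor
  · -- distance within edge of L
    have hlen := LG.len_eq a b hab
    have htI : t ∈ Set.Icc (0:ℝ) (LG.L.ℓ s(a, b)) := by
      constructor
      · exact ht.1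
      · rw [hlen]; linarith [ht.2]
    exact mg_dist_param_vertex LG.L hab htI
  · have hx := hm.h_halfEdge a b hab u v0 huw hequ' hv0b t ht
    have hswap : M.param v0 u huw.symm (M.ℓ (LG.vEquiv a : Sym2 M.V) / 2 - t)
        = M.param u v0 huw (M.ℓ (LG.vEquiv a : Sym2 M.V) / 2 + t) := by
      rw [M.param_symm u v0 huw]
      congr 1
      rw [← hequ']
      ring
    rw [hx, ← hswap]
    have hIcc : M.ℓ (LG.vEquiv a : Sym2 M.V) / 2 - t ∈ Set.Icc (0:ℝ) (M.ℓ s(v0, u)) := by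
      have : M.ℓ s(v0, u) = M.ℓ (LG.vEquiv a : Sym2 M.V) := by rw [Sym2.eq_swap, ← hequ']
      rw [this]
      constructor
      · linarith [ht.2]
      · linarith [ht.1]
    exact mg_dist_param_vertex M huw.symm hIcc

lemma lg_decomp (LG : LineGraphOf M) (hm : CanonicalMap M LG) (x : LG.L.X) :
    ∃ (a : LG.L.V) (w : M.V) (s : ℝ),
      w ∈ (LG.vEquiv a : Sym2 M.V) ∧ 0 ≤ s ∧
      dist x (LG.L.ι a) ≤ s ∧
      dist (hm.h x) (M.ι w) + s ≤ M.ℓ (LG.vEquiv a : Sym2 M.V) / 2 := by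
  obtain ⟨a, b, hab, t, htI, hxeq⟩ := LG.L.cover x
  obtain ⟨hne, v0, hv0a, hv0b⟩ := (LG.adj_iff a b).1 hab
  have hlen := LG.len_eq a b hab
  have hea_pos : 0 < M.ℓ (LG.vEquiv a : Sym2 M.V) := M.ℓ_pos _ (LG.vEquiv a).2
  have heb_pos : 0 < M.ℓ (LG.vEquiv b : Sym2 M.V) := M.ℓ_pos _ (LG.vEquiv b).2
  by_cases hcase : t ≤ M.ℓ (LG.vEquiv a : Sym2 M.V) / 2
  · obtain ⟨h1, h2⟩ := lg_decomp_half M LG hm a b hab hv0a hv0b (t := t) ⟨htI.1, hcase⟩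
    rw [← hxeq] at h1 h2
    exact ⟨a, v0, t, hv0a, htI.1, h1, by linarith⟩
  · set t' := LG.L.ℓ s(a, b) - t with ht'def
    have hxeq2 : x = LG.L.param b a hab.symm t' := by
      rw [LG.L.param_symm a b hab t', hxeq]
      congr 1
      rw [ht'def]
      ring
    have ht'I : t' ∈ Set.Icc (0:ℝ) (M.ℓ (LG.vEquiv b : Sym2 M.V) / 2) := by
      constructor
      · rw [ht'def]; linarith [htI.2]
      · rw [ht'def, hlen]; linarith [htI.1]
    obtain ⟨h1, h2⟩ := lg_decomp_half M LG hm b a hab.symm hv0b hv0a (t := t') ht'I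
    rw [← hxeq2] at h1 h2
    exact ⟨b, v0, t', hv0b, ht'I.1, h1, by linarith⟩

end AuxLemmas

/-- For every `x, y ∈ L(G)`,
`d_{L(G)}(x, y) ≤ d_G(h(x), h(y)) + 2 l_max`, where `l_max = sup_{e ∈ E(G)} L(e)`. -/
theorem canonicalMap_dist_le (M : MetricGraph) (LG : LineGraphOf M)
    (hm : CanonicalMap M LG) (x y : LG.L.X) :
    edist x y ≤ edist (hm.h x) (hm.h y) + 2 * M.lmax := by
  obtain ⟨a, w, s, hwa, hs0, hxa, hxw⟩ := lg_decomp M LG hm x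
  obtain ⟨c, w', s', hwc, hs0', hyc, hyw⟩ := lg_decomp M LG hm y
  have key := lg_vertex_dist_le' M LG a c hwa hwc
  have tri1 : dist x y ≤ dist x (LG.L.ι a) + dist (LG.L.ι a) (LG.L.ι c) + dist (LG.L.ι c) y :=
    dist_triangle4 _ _ _ _
  have tri1' : dist (LG.L.ι c) y = dist y (LG.L.ι c) := dist_comm _ _
  have tri2 : dist (M.ι w) (M.ι w') ≤
      dist (M.ι w) (hm.h x) + dist (hm.h x) (hm.h y) + dist (hm.h y) (M.ι w') :=
    dist_triangle4 _ _ _ _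
  have tri2' : dist (M.ι w) (hm.h x) = dist (hm.h x) (M.ι w) := dist_comm _ _
  have tri2'' : dist (hm.h y) (M.ι w') = dist (hm.h y) (M.ι w') := rfl
  have hyw' : dist (hm.h y) (M.ι w') + s' ≤ M.ℓ (LG.vEquiv c : Sym2 M.V) / 2 := hyw
  have R : dist x y ≤ dist (hm.h x) (hm.h y)
      + M.ℓ (LG.vEquiv a : Sym2 M.V) + M.ℓ (LG.vEquiv c : Sym2 M.V) := by
    linarith
  have hEa : ENNReal.ofReal (M.ℓ (LG.vEquiv a : Sym2 M.V)) ≤ M.lmax :=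
    le_iSup (fun e : M.G.edgeSet => ENNReal.ofReal (M.ℓ (e : Sym2 M.V))) (LG.vEquiv a)
  have hEc : ENNReal.ofReal (M.ℓ (LG.vEquiv c : Sym2 M.V)) ≤ M.lmax :=
    le_iSup (fun e : M.G.edgeSet => ENNReal.ofReal (M.ℓ (e : Sym2 M.V))) (LG.vEquiv c)
  calc edist x y = ENNReal.ofReal (dist x y) := edist_dist _ _
    _ ≤ ENNReal.ofReal (dist (hm.h x) (hm.h y)
        + M.ℓ (LG.vEquiv a : Sym2 M.V) + M.ℓ (LG.vEquiv c : Sym2 M.V)) :=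
      ENNReal.ofReal_le_ofReal R
    _ ≤ (ENNReal.ofReal (dist (hm.h x) (hm.h y))
        + ENNReal.ofReal (M.ℓ (LG.vEquiv a : Sym2 M.V)))
        + ENNReal.ofReal (M.ℓ (LG.vEquiv c : Sym2 M.V)) :=
      le_trans ENNReal.ofReal_add_le (add_le_add_left ENNReal.ofReal_add_le _)
    _ ≤ (edist (hm.h x) (hm.h y) + M.lmax) + M.lmax := by
      refine add_le_add (add_le_add ?_ hEa) hEc
      rw [edist_dist]
    _ = edist (hm.h x) (hm.h y) + 2 * M.lmax := by
      rw [two_mul, add_assoc]
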